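/- Let $\nu$ be a finite signed countably additive measure on $(\Omega,\mathcal{A})$ and $\mu$ a measure. Suppose $\nu = \nu_a^1 + \nu_d^1 + \nu_s^1 = \nu_a^2 + \nu_d^2 + \nu_s^2$ are two decompositions into finite signed measures where each $\nu_a^i$ is absolutely continuous w.r.t. $\mu$ and concentrated on a $\mu$-$\sigma$-finite set, each $\nu_d^i$ is diffuse w.r.t. $\mu$ (vanishes on every $\mu$-$\sigma$-finite set), and each $\nu_s^i$ is concentrated on a $\mu$-null set. Then $\nu_a^1 = \nu_a^2$, $\nu_d^1 = \nu_d^2$, and $\nu_s^1 = \nu_s^2$. -/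

import Mathlib

open MeasureTheory ENNReal

variable {Ω : Type*} [MeasurableSpace Ω]

/-- A `μ`-σ-finite set: a countable union of sets of finite `μ`-measure. -/
def SigmaFiniteSet (μ : Measure Ω) (S : Set Ω) : Prop :=
  ∃ g : ℕ → Set Ω, S = ⋃ n, g n ∧ ∀ n, MeasurableSet (g n) ∧ μ (g n) < ⊤

/-- A signed measure `ρ` is concentrated on `S` if `ρ(A) = ρ(A ∩ S)` for all
measurable `A`. -/
def ConcentratedOn (ρ : SignedMeasure Ω) (S : Set Ω) : Prop :=
  MeasurableSet S ∧ ∀ A : Set Ω, MeasurableSet A → ρ A = ρ (A ∩ S)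

lemma sigmaFiniteSet_union {μ : Measure Ω} {S T : Set Ω}
    (hS : SigmaFiniteSet μ S) (hT : SigmaFiniteSet μ T) : SigmaFiniteSet μ (S ∪ T) := by
  obtain ⟨g, hg, hgm⟩ := hS
  obtain ⟨h, hh, hhm⟩ := hT
  refine ⟨(Sum.elim g h) ∘ (Denumerable.eqv (ℕ ⊕ ℕ)).symm, ?_, ?_⟩
  · rw [hg, hh]
    ext x
    simp only [Set.mem_union, Set.mem_iUnion, Function.comp_apply]
    constructor
    · rintro (⟨n, hn⟩ | ⟨n, hn⟩)
      · exact ⟨(Denumerable.eqv (ℕ ⊕ ℕ)) (Sum.inl n), by simp [hn]⟩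
      · exact ⟨(Denumerable.eqv (ℕ ⊕ ℕ)) (Sum.inr n), by simp [hn]⟩
    · rintro ⟨n, hn⟩
      rcases hs : (Denumerable.eqv (ℕ ⊕ ℕ)).symm n with k | k <;> rw [hs] at hn
      · exact Or.inl ⟨k, hn⟩
      · exact Or.inr ⟨k, hn⟩
  · intro n
    rcases hk : (Denumerable.eqv (ℕ ⊕ ℕ)).symm n with k | k <;> simp only [Function.comp_apply, hk]
    · exact hgm k
    · exact hhm k

lemma sigmaFiniteSet_subset {μ : Measure Ω} {S B : Set Ω}
    (hS : SigmaFiniteSet μ S) (hB : MeasurableSet B) (hBS : B ⊆ S) : SigmaFiniteSet μ B := by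
  obtain ⟨g, hg, hgm⟩ := hS
  refine ⟨fun n => g n ∩ B, ?_, fun n => ⟨(hgm n).1.inter hB, ?_⟩⟩
  · rw [← Set.iUnion_inter, ← hg, Set.inter_eq_right.mpr hBS]
  · exact lt_of_le_of_lt (measure_mono Set.inter_subset_left) (hgm n).2

lemma sigmaFiniteSet_of_null {μ : Measure Ω} {B : Set Ω} (hBm : MeasurableSet B)
    (hB : μ B = 0) : SigmaFiniteSet μ B :=
  ⟨fun _ => B, (Set.iUnion_const B).symm, fun _ => ⟨hBm, by simp [hB]⟩⟩

lemma concentratedOn_mono {ρ : SignedMeasure Ω} {T S : Set Ω}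
    (h : ConcentratedOn ρ T) (hS : MeasurableSet S) (hTS : T ⊆ S) :
    ∀ A : Set Ω, MeasurableSet A → ρ A = ρ (A ∩ S) := by
  intro A hA
  rw [h.2 A hA, h.2 (A ∩ S) (hA.inter hS), Set.inter_assoc, Set.inter_eq_right.mpr hTS]

/-- Uniqueness of the de Giorgi decomposition
`ν = ν_a + ν_d + ν_s` of a finite signed measure with respect to an arbitrary
measure `μ`, into an absolutely continuous part concentrated on a `μ`-σ-finite set,
a diffuse part (vanishing on every `μ`-σ-finite set), and a part concentrated on a
`μ`-null set. -/
theorem deGiorgi_decomposition_unique (μ : Measure Ω)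
    (ν νa1 νd1 νs1 νa2 νd2 νs2 : SignedMeasure Ω)
    (hsum1 : ν = νa1 + νd1 + νs1) (hsum2 : ν = νa2 + νd2 + νs2)
    (ha1 : (∀ A : Set Ω, MeasurableSet A → μ A = 0 → νa1 A = 0) ∧
      ∃ S : Set Ω, SigmaFiniteSet μ S ∧ ConcentratedOn νa1 S)
    (ha2 : (∀ A : Set Ω, MeasurableSet A → μ A = 0 → νa2 A = 0) ∧
      ∃ S : Set Ω, SigmaFiniteSet μ S ∧ ConcentratedOn νa2 S)
    (hd1 : ∀ A : Set Ω, MeasurableSet A → SigmaFiniteSet μ A → νd1 A = 0)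
    (hd2 : ∀ A : Set Ω, MeasurableSet A → SigmaFiniteSet μ A → νd2 A = 0)
    (hs1 : ∃ N : Set Ω, MeasurableSet N ∧ μ N = 0 ∧ ConcentratedOn νs1 N)
    (hs2 : ∃ N : Set Ω, MeasurableSet N ∧ μ N = 0 ∧ ConcentratedOn νs2 N) :
    νa1 = νa2 ∧ νd1 = νd2 ∧ νs1 = νs2 := by
  obtain ⟨hac1, S1, hS1, hc1⟩ := ha1
  obtain ⟨hac2, S2, hS2, hc2⟩ := ha2
  obtain ⟨N1, hN1m, hN1, hn1⟩ := hs1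
  obtain ⟨N2, hN2m, hN2, hn2⟩ := hs2
  set S : Set Ω := S1 ∪ S2 with hSdef
  have hSsig : SigmaFiniteSet μ S := sigmaFiniteSet_union hS1 hS2
  have hSm : MeasurableSet S := hc1.1.union hc2.1
  set N : Set Ω := N1 ∪ N2 with hNdef
  have hNm : MeasurableSet N := hN1m.union hN2m
  have hN0 : μ N = 0 := by
    rw [hNdef]
    exact le_antisymm (le_trans (measure_union_le _ _) (by simp [hN1, hN2])) zero_le
  -- νs1 A = ν (A ∩ N) = νs2 A for measurable A
  have key_s : ∀ (νa νd νs : SignedMeasure Ω), ν = νa + νd + νs →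
      (∀ A : Set Ω, MeasurableSet A → μ A = 0 → νa A = 0) →
      (∀ A : Set Ω, MeasurableSet A → SigmaFiniteSet μ A → νd A = 0) →
      (∀ Ni : Set Ω, Ni ⊆ N → ConcentratedOn νs Ni →
      ∀ A : Set Ω, MeasurableSet A → νs A = ν (A ∩ N)) := by
    intro νa νd νs hsum hac hdif Ni hNiN hcons A hA
    have hANm : MeasurableSet (A ∩ N) := hA.inter hNm
    have hAN0 : μ (A ∩ N) = 0 :=
      le_antisymm (le_trans (measure_mono Set.inter_subset_right) hN0.le) zero_le
    have h1 : νs A = νs (A ∩ N) := concentratedOn_mono hcons hNm hNiN A hA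
    have : ν (A ∩ N) = νa (A ∩ N) + νd (A ∩ N) + νs (A ∩ N) := by
      rw [hsum]; rfl
    rw [hac _ hANm hAN0, hdif _ hANm (sigmaFiniteSet_of_null hANm hAN0)] at this
    simp at this
    rw [h1, this]
  have hs_eq : νs1 = νs2 := by
    apply VectorMeasure.ext
    intro A hA
    rw [key_s νa1 νd1 νs1 hsum1 hac1 hd1 N1 Set.subset_union_left hn1 A hA,
        key_s νa2 νd2 νs2 hsum2 hac2 hd2 N2 Set.subset_union_right hn2 A hA]
  -- νa1 A = ν ((A ∩ S) \ N) = νa2 A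
  have key_a : ∀ (νa νd νs : SignedMeasure Ω), ν = νa + νd + νs →
      (∀ A : Set Ω, MeasurableSet A → μ A = 0 → νa A = 0) →
      (∀ A : Set Ω, MeasurableSet A → SigmaFiniteSet μ A → νd A = 0) →
      (∀ Si : Set Ω, Si ⊆ S → ConcentratedOn νa Si →
      ∀ Ni : Set Ω, Ni ⊆ N → ConcentratedOn νs Ni →
      ∀ A : Set Ω, MeasurableSet A → νa A = ν ((A ∩ S) \ N)) := by
    intro νa νd νs hsum hac hdif Si hSiS hcona Ni hNiN hcons A hA
    set B : Set Ω := (A ∩ S) \ N with hBdef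
    have hBm : MeasurableSet B := (hA.inter hSm).diff hNm
    have hBsig : SigmaFiniteSet μ B :=
      sigmaFiniteSet_subset hSsig hBm (fun x hx => hx.1.2)
    -- νa A = νa B
    have h1 : νa A = νa (A ∩ S) := concentratedOn_mono hcona hSm hSiS A hA
    have h2 : νa (A ∩ S) = νa B + νa (A ∩ S ∩ N) := by
      have hU : A ∩ S = B ∪ (A ∩ S ∩ N) := by
        rw [hBdef]; ext x; by_cases hx : x ∈ N <;> simp [hx]
      calc νa (A ∩ S) = νa (B ∪ (A ∩ S ∩ N)) := by rw [← hU]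
        _ = νa B + νa (A ∩ S ∩ N) :=
          VectorMeasure.of_union (Set.disjoint_left.mpr fun x hx hx' => hx.2 hx'.2)
            hBm ((hA.inter hSm).inter hNm)
    have h3 : νa (A ∩ S ∩ N) = 0 := by
      apply hac _ ((hA.inter hSm).inter hNm)
      exact le_antisymm (le_trans (measure_mono Set.inter_subset_right) hN0.le) zero_le
    -- ν B = νa B
    have h4 : ν B = νa B + νd B + νs B := by rw [hsum]; rfl
    have h5 : νd B = 0 := hdif _ hBm hBsig
    have h6 : νs B = 0 := by
      rw [hcons.2 B hBm]
      have : B ∩ Ni = ∅ := by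
        ext x; simp only [Set.mem_inter_iff, Set.mem_empty_iff_false, iff_false]
        rintro ⟨hxB, hxNi⟩; exact hxB.2 (hNiN hxNi)
      rw [this]; simp
    rw [h1, h2, h3, add_zero]
    rw [h5, h6, add_zero, add_zero] at h4
    exact h4.symm
  have ha_eq : νa1 = νa2 := by
    apply VectorMeasure.ext
    intro A hA
    rw [key_a νa1 νd1 νs1 hsum1 hac1 hd1 S1 Set.subset_union_left hc1
          N1 Set.subset_union_left hn1 A hA,
        key_a νa2 νd2 νs2 hsum2 hac2 hd2 S2 Set.subset_union_right hc2
          N2 Set.subset_union_right hn2 A hA]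
  refine ⟨ha_eq, ?_, hs_eq⟩
  have : νa1 + νd1 + νs1 = νa2 + νd2 + νs2 := by rw [← hsum1, ← hsum2]
  rw [ha_eq, hs_eq] at this
  have := add_right_cancel this
  exact add_left_cancel this
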